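/- If Lloyd's algorithm in ℝ starts from a fixed point, it outputs the partition of that fixed point; combined with the fixed-point example, for any a₁ < a₂ < b₁ < b₂ with (a₁ + (a₂+b₁+b₂)/3)/2 < a₂, initializing 2-means with centers a₁, a₂ terminates with partition {{a₁},{a₂,b₁,b₂}}, which differs from {{a₁,a₂},{b₁,b₂}}. -/

import Mathlib

open scoped Classical

/-- Nearest-center assignment in ℝ (ties broken toward the smaller center). -/
noncomputable def nearest (C : Finset ℝ) (p : ℝ) : ℝ :=
  WithTop.untopD 0 ((C.filter (fun c => ∀ c' ∈ C, |p - c| ≤ |p - c'|)).min)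

/-- One Lloyd iteration on dataset `X`: each center is replaced by the mean of
the data points assigned to it. -/
noncomputable def lloydStep (X : Finset ℝ) (C : Finset ℝ) : Finset ℝ :=
  C.image (fun c =>
    (∑ s ∈ X.filter (fun p => nearest C p = c), s) /
      (X.filter (fun p => nearest C p = c)).card)

/-- The partition of the dataset `X` induced by nearest-center assignment. -/
noncomputable def partitionOf (X : Finset ℝ) (C : Finset ℝ) : Finset (Finset ℝ) :=
  C.image (fun c => X.filter (fun p => nearest C p = c))

lemma nearest_left {c d p : ℝ} (h : |p - c| < |p - d|) : nearest {c, d} p = c := by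
  unfold nearest
  have hf : ({c, d} : Finset ℝ).filter
      (fun x => ∀ x' ∈ ({c, d} : Finset ℝ), |p - x| ≤ |p - x'|) = {c} := by
    ext x
    simp only [Finset.mem_filter, Finset.mem_insert, Finset.mem_singleton]
    constructor
    · rintro ⟨hx | rfl, hall⟩
      · exact hx
      · have := hall c (Or.inl rfl); linarith
    · rintro rfl
      exact ⟨Or.inl rfl, by rintro x' (rfl | rfl); exacts [le_refl _, h.le]⟩
  rw [hf]; simp

lemma nearest_right {c d p : ℝ} (h : |p - d| < |p - c|) : nearest {c, d} p = d := by
  unfold nearest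
  have hf : ({c, d} : Finset ℝ).filter
      (fun x => ∀ x' ∈ ({c, d} : Finset ℝ), |p - x| ≤ |p - x'|) = {d} := by
    ext x
    simp only [Finset.mem_filter, Finset.mem_insert, Finset.mem_singleton]
    constructor
    · rintro ⟨rfl | hx, hall⟩
      · have := hall d (Or.inr rfl); linarith
      · exact hx
    · rintro rfl
      exact ⟨Or.inr rfl, by rintro x' (rfl | rfl); exacts [h.le, le_refl _]⟩
  rw [hf]; simp

/-- for a₁ < a₂ < b₁ < b₂ with (a₁ + (a₂+b₁+b₂)/3)/2 < a₂,
2-means initialized with centers a₁, a₂ reaches after one step the fixed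
point with centers a₁, (a₂+b₁+b₂)/3, stays there forever, and terminates
with partition {{a₁},{a₂,b₁,b₂}}, which differs from {{a₁,a₂},{b₁,b₂}}. -/
theorem stmt_17 (a₁ a₂ b₁ b₂ : ℝ) (h1 : a₁ < a₂) (h2 : a₂ < b₁) (h3 : b₁ < b₂)
    (hmid : (a₁ + (a₂ + b₁ + b₂) / 3) / 2 < a₂) :
    ∀ X : Finset ℝ, X = {a₁, a₂, b₁, b₂} →
    ∀ c₂ : ℝ, c₂ = (a₂ + b₁ + b₂) / 3 →
      (∀ n : ℕ, 1 ≤ n → (lloydStep X)^[n] {a₁, a₂} = {a₁, c₂}) ∧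
      (∀ n : ℕ, 1 ≤ n →
        partitionOf X ((lloydStep X)^[n] {a₁, a₂}) =
          ({({a₁} : Finset ℝ), ({a₂, b₁, b₂} : Finset ℝ)} : Finset (Finset ℝ))) ∧
      ({({a₁} : Finset ℝ), ({a₂, b₁, b₂} : Finset ℝ)} : Finset (Finset ℝ)) ≠
        {({a₁, a₂} : Finset ℝ), ({b₁, b₂} : Finset ℝ)} := by
  intro X hX c₂ hc₂
  have hc₂a : a₂ < c₂ := by rw [hc₂]; linarith
  have ne21 : a₂ ≠ a₁ := h1.ne'
  have neb1a1 : b₁ ≠ a₁ := by linarith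
  have neb2a1 : b₂ ≠ a₁ := by linarith
  have neb1a2 : b₁ ≠ a₂ := h2.ne'
  have neb2a2 : b₂ ≠ a₂ := by linarith
  have neb2b1 : b₂ ≠ b₁ := h3.ne'
  -- nearest w.r.t. {a₁, a₂}
  have n1 : nearest {a₁, a₂} a₁ = a₁ := nearest_left (by rw [abs_of_nonpos, abs_of_nonpos] <;> linarith)
  have n2 : nearest {a₁, a₂} a₂ = a₂ := nearest_right (by rw [abs_of_nonneg, abs_of_nonneg] <;> linarith)
  have n3 : nearest {a₁, a₂} b₁ = a₂ := nearest_right (by rw [abs_of_nonneg, abs_of_nonneg] <;> linarith)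
  have n4 : nearest {a₁, a₂} b₂ = a₂ := nearest_right (by rw [abs_of_nonneg, abs_of_nonneg] <;> linarith)
  -- nearest w.r.t. {a₁, c₂}
  have m1 : nearest {a₁, c₂} a₁ = a₁ := nearest_left (by rw [abs_of_nonpos, abs_of_nonpos] <;> linarith)
  have m2 : nearest {a₁, c₂} a₂ = c₂ := nearest_right (by
    rw [abs_of_nonpos (by linarith), abs_of_nonneg (by linarith)]; rw [hc₂]; linarith)
  have m3 : nearest {a₁, c₂} b₁ = c₂ := nearest_right (by
    rw [abs_of_nonneg (by linarith : (0:ℝ) ≤ b₁ - a₁)]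
    rw [abs_lt]; constructor <;> · rw [hc₂] at *; linarith)
  have m4 : nearest {a₁, c₂} b₂ = c₂ := nearest_right (by
    rw [abs_of_nonneg (by linarith : (0:ℝ) ≤ b₂ - a₁)]
    rw [abs_lt]; constructor <;> · rw [hc₂] at *; linarith)
  -- filters
  have hfilt1 : X.filter (fun p => nearest {a₁, a₂} p = a₁) = {a₁} := by
    rw [hX]
    simp [Finset.filter_insert, Finset.filter_singleton, n1, n2, n3, n4, ne21]
  have hfilt2 : X.filter (fun p => nearest {a₁, a₂} p = a₂) = {a₂, b₁, b₂} := by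
    rw [hX]
    simp [Finset.filter_insert, Finset.filter_singleton, n1, n2, n3, n4, ne21.symm]
  have gfilt1 : X.filter (fun p => nearest {a₁, c₂} p = a₁) = {a₁} := by
    rw [hX]
    simp [Finset.filter_insert, Finset.filter_singleton, m1, m2, m3, m4, hc₂a.ne', (h1.trans hc₂a).ne']
  have gfilt2 : X.filter (fun p => nearest {a₁, c₂} p = c₂) = {a₂, b₁, b₂} := by
    rw [hX]
    simp [Finset.filter_insert, Finset.filter_singleton, m1, m2, m3, m4, (h1.trans hc₂a).ne]
  have hsum : (∑ s ∈ ({a₂, b₁, b₂} : Finset ℝ), s) = a₂ + b₁ + b₂ := by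
    rw [Finset.sum_insert (by simp [neb1a2.symm, neb2a2.symm]),
      Finset.sum_insert (by simp [neb2b1.symm]), Finset.sum_singleton]
    ring
  have hcard : ({a₂, b₁, b₂} : Finset ℝ).card = 3 := by
    rw [Finset.card_insert_of_notMem (by simp [neb1a2.symm, neb2a2.symm]),
      Finset.card_insert_of_notMem (by simp [neb2b1.symm]), Finset.card_singleton]
  -- one step
  have hstep1 : lloydStep X {a₁, a₂} = {a₁, c₂} := by
    unfold lloydStep
    rw [show ({a₁, a₂} : Finset ℝ) = insert a₁ {a₂} from rfl, Finset.image_insert,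
      Finset.image_singleton]
    rw [hfilt1, hfilt2, hsum, hcard]
    norm_num [hc₂]
  have hstep2 : lloydStep X {a₁, c₂} = {a₁, c₂} := by
    unfold lloydStep
    rw [show ({a₁, c₂} : Finset ℝ) = insert a₁ {c₂} from rfl, Finset.image_insert,
      Finset.image_singleton]
    rw [gfilt1, gfilt2, hsum, hcard]
    norm_num [hc₂]
  have hiter : ∀ n : ℕ, 1 ≤ n → (lloydStep X)^[n] {a₁, a₂} = {a₁, c₂} := by
    intro n hn
    obtain ⟨m, rfl⟩ := Nat.exists_eq_add_of_le hn
    rw [add_comm, Function.iterate_add_apply, Function.iterate_one, hstep1,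
      Function.iterate_fixed hstep2]
  refine ⟨hiter, ?_, ?_⟩
  · intro n hn
    rw [hiter n hn]
    unfold partitionOf
    rw [show ({a₁, c₂} : Finset ℝ) = insert a₁ {c₂} from rfl, Finset.image_insert,
      Finset.image_singleton, gfilt1, gfilt2]
  · intro heq
    have hm : ({a₁} : Finset ℝ) = {a₁, a₂} ∨ ({a₁} : Finset ℝ) = {b₁, b₂} := by
      have := heq ▸ Finset.mem_insert_self ({a₁} : Finset ℝ) {({a₂, b₁, b₂} : Finset ℝ)}
      simpa using this
    rcases hm with hm | hm
    · have : a₂ ∈ ({a₁} : Finset ℝ) := hm ▸ (by simp)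
      simp at this; exact ne21 this
    · have : b₁ ∈ ({a₁} : Finset ℝ) := hm ▸ (by simp)
      simp at this; exact neb1a1 this
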